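/- Let α : V × V → U be a symmetric bilinear map and let β(X,Y) = (α(X,Y)+α(JX,JY), α(X,JY)-α(JX,Y)). Let S(β) = span{β(X,Y) : X,Y ∈ V} ⊆ U × U and let V₁ = π₁(S(β)) ⊆ U be its image under the projection π₁ : U × U → U onto the first factor. Then S(β) = V₁ × V₁. -/

import Mathlib

/-- `S(β) = V₁ × V₁` where `V₁ = π₁(S(β))`. -/
theorem stmt_14
    {V U : Type*} [AddCommGroup V] [Module ℝ V] [FiniteDimensional ℝ V]
    [AddCommGroup U] [Module ℝ U] [FiniteDimensional ℝ U]
    (J : V →ₗ[ℝ] V) (hJ : ∀ v : V, J (J v) = -v)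
    (α : V →ₗ[ℝ] V →ₗ[ℝ] U) (hα : ∀ X Y : V, α X Y = α Y X)
    (β : V →ₗ[ℝ] V →ₗ[ℝ] (U × U))
    (hβ : ∀ X Y : V, β X Y = (α X Y + α (J X) (J Y), α X (J Y) - α (J X) Y))
    (S : Submodule ℝ (U × U))
    (hS : S = Submodule.span ℝ {w : U × U | ∃ X Y : V, β X Y = w}) :
    S = (Submodule.map (LinearMap.fst ℝ U U) S).prod
          (Submodule.map (LinearMap.fst ℝ U U) S) := by
  set G : Set (U × U) := {w : U × U | ∃ X Y : V, β X Y = w} with hG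
  -- the swap map and the conjugation map
  set sw : (U × U) →ₗ[ℝ] (U × U) :=
    LinearMap.prod (LinearMap.snd ℝ U U) (LinearMap.fst ℝ U U) with hsw
  set c : (U × U) →ₗ[ℝ] (U × U) :=
    LinearMap.prod (LinearMap.fst ℝ U U) (-LinearMap.snd ℝ U U) with hc
  have hswG : ∀ w ∈ G, sw w ∈ G := by
    rintro w ⟨X, Y, rfl⟩
    refine ⟨J Y, X, ?_⟩
    rw [hβ X Y, hβ (J Y) X]
    simp only [hsw, LinearMap.prod_apply, LinearMap.snd_apply, LinearMap.fst_apply, Function.prod]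
    rw [hJ Y]
    simp only [map_neg, LinearMap.neg_apply]
    rw [Prod.mk.injEq]
    constructor
    · rw [hα (J Y) X, hα Y (J X)]; abel
    · rw [hα (J Y) (J X), hα Y X]; abel
  have hcG : ∀ w ∈ G, c w ∈ G := by
    rintro w ⟨X, Y, rfl⟩
    refine ⟨Y, X, ?_⟩
    rw [hβ X Y, hβ Y X]
    simp only [hc, LinearMap.prod_apply, LinearMap.fst_apply, LinearMap.neg_apply,
      LinearMap.snd_apply, Function.prod]
    rw [Prod.mk.injEq]
    constructor
    · rw [hα Y X, hα (J Y) (J X)]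
    · rw [hα Y (J X), hα (J Y) X]; abel
  -- S is closed under sw and c
  have hmap : ∀ (f : (U × U) →ₗ[ℝ] (U × U)), (∀ w ∈ G, f w ∈ G) →
      ∀ w ∈ S, f w ∈ S := by
    intro f hf w hw
    have : Submodule.map f S ≤ S := by
      rw [hS, Submodule.map_span]
      exact Submodule.span_mono (by rintro _ ⟨x, hx, rfl⟩; exact hf x hx)
    exact this ⟨w, hw, rfl⟩
  have hswS : ∀ w ∈ S, sw w ∈ S := hmap sw hswG
  have hcS : ∀ w ∈ S, c w ∈ S := hmap c hcG
  -- (u, 0) ∈ S for u ∈ π₁ S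
  have hfirst : ∀ w ∈ S, ((w.1 : U), (0 : U)) ∈ S := by
    intro w hw
    have h2 : w + c w ∈ S := S.add_mem hw (hcS w hw)
    have he : ((1:ℝ)/2) • (w + c w) = (w.1, (0:U)) := by
      simp only [hc, LinearMap.prod_apply, LinearMap.fst_apply, LinearMap.neg_apply,
        LinearMap.snd_apply, Function.prod, Prod.smul_mk, Prod.mk_add_mk, smul_eq_mul,
        Prod.ext_iff]
      constructor
      · show ((1:ℝ)/2) • (w.1 + w.1) = w.1
        rw [smul_add, ← add_smul]; norm_num
      · show ((1:ℝ)/2) • (w.2 + -w.2) = 0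
        simp
    have := S.smul_mem ((1:ℝ)/2) h2
    rwa [he] at this
  apply le_antisymm
  · intro w hw
    refine ⟨⟨w, hw, rfl⟩, ⟨sw w, hswS w hw, rfl⟩⟩
  · rintro ⟨u, v⟩ ⟨⟨p, hp, hp1⟩, ⟨q, hq, hq1⟩⟩
    have h1 : ((u : U), (0 : U)) ∈ S := by
      have := hfirst p hp
      simp only [LinearMap.fst_apply] at hp1
      rwa [hp1] at this
    have h2 : ((v : U), (0 : U)) ∈ S := by
      have := hfirst q hq
      simp only [LinearMap.fst_apply] at hq1
      rwa [hq1] at this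
    have h3 : ((0 : U), (v : U)) ∈ S := hswS _ h2
    have := S.add_mem h1 h3
    simpa using this
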